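/- Let (Ω, μ) be a probability space, Y : Ω → {0,1} a measurable random variable, and X : Ω → 𝒳, ξ : Ω → Ξ, U : Ω → 𝒰 measurable maps into standard Borel spaces. Let 𝒢 = σ(ξ) ⊔ σ(U) and ℱ = σ(X) ⊔ σ(U), and let p_𝒢 = μ[Y | 𝒢] and p_ℱ = μ[Y | ℱ] be versions of the conditional expectations taking values in the open interval (0,1) almost surely. Assume X and Y are conditionally independent given 𝒢, and that the random variables Y·log p_𝒢, (1−Y)·log(1−p_𝒢), Y·log p_ℱ, (1−Y)·log(1−p_ℱ) are integrable. Then E[−Y log p_𝒢 − (1−Y) log(1−p_𝒢)] ≤ E[−Y log p_ℱ − (1−Y) log(1−p_ℱ)]; that is, the expected cross-entropy of Y against its conditional probability given (ξ, U) is no larger than the expected cross-entropy of Y against its conditional probability given (X, U). -/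

import Mathlib

open MeasureTheory ProbabilityTheory Real Set

lemma gibbs_aux {q p : ℝ} (hq : q ∈ Set.Ioo (0:ℝ) 1) (hp : p ∈ Set.Ioo (0:ℝ) 1) :
    0 ≤ q * (Real.log q - Real.log p) + (1 - q) * (Real.log (1 - q) - Real.log (1 - p)) := by
  obtain ⟨hq0, hq1⟩ := hq; obtain ⟨hp0, hp1⟩ := hp
  have h1 : Real.log p - Real.log q ≤ p / q - 1 := by
    rw [← Real.log_div (ne_of_gt hp0) (ne_of_gt hq0)]
    exact Real.log_le_sub_one_of_pos (div_pos hp0 hq0)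
  have h2 : Real.log (1 - p) - Real.log (1 - q) ≤ (1 - p) / (1 - q) - 1 := by
    rw [← Real.log_div (by linarith) (by linarith)]
    exact Real.log_le_sub_one_of_pos (div_pos (by linarith) (by linarith))
  have a1 : q * (Real.log p - Real.log q) ≤ p - q := by
    have := mul_le_mul_of_nonneg_left h1 (le_of_lt hq0)
    have e1 : q * (p / q - 1) = p - q := by field_simp
    linarith [e1 ▸ this]
  have a2 : (1 - q) * (Real.log (1 - p) - Real.log (1 - q)) ≤ q - p := by
    have := mul_le_mul_of_nonneg_left h2 (by linarith : (0:ℝ) ≤ 1 - q)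
    have hne : (1:ℝ) - q ≠ 0 := by linarith
    have e2 : (1 - q) * ((1 - p) / (1 - q) - 1) = q - p := by
      field_simp
      ring
    linarith [e2 ▸ this]
  nlinarith [a1, a2]

lemma cross_entropy_aux {Ω 𝒳 Ξ 𝒰 : Type*}
    (G F H : MeasurableSpace Ω)
    [MeasurableSpace 𝒳] [MeasurableSpace Ξ] [MeasurableSpace 𝒰]
    {mΩ : MeasurableSpace Ω}
    (μ : Measure Ω) [IsProbabilityMeasure μ]
    (Y : Ω → ℝ) (hY : Measurable Y) (hY01 : ∀ ω, Y ω = 0 ∨ Y ω = 1)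
    (X : Ω → 𝒳) (hX : Measurable X)
    (ξ : Ω → Ξ) (hξ : Measurable ξ)
    (U : Ω → 𝒰) (hU : Measurable U)
    (hG : G = MeasurableSpace.comap ξ inferInstance ⊔ MeasurableSpace.comap U inferInstance)
    (hF : F = MeasurableSpace.comap X inferInstance ⊔ MeasurableSpace.comap U inferInstance)
    (hH : H = G ⊔ F)
    (pG pF : Ω → ℝ)
    (hpG : pG =ᵐ[μ] μ[Y | G]) (hpF : pF =ᵐ[μ] μ[Y | F])
    (hpG01 : ∀ᵐ ω ∂μ, pG ω ∈ Set.Ioo (0:ℝ) 1)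
    (hpF01 : ∀ᵐ ω ∂μ, pF ω ∈ Set.Ioo (0:ℝ) 1)
    (hCI : ∀ (A : Set 𝒳) (B : Set ℝ), MeasurableSet A → MeasurableSet B →
      (μ[fun ω => (X ⁻¹' A).indicator (fun _ => (1:ℝ)) ω *
          (Y ⁻¹' B).indicator (fun _ => (1:ℝ)) ω | G])
        =ᵐ[μ]
      fun ω => (μ[(X ⁻¹' A).indicator (fun _ => (1:ℝ)) | G]) ω *
        (μ[(Y ⁻¹' B).indicator (fun _ => (1:ℝ)) | G]) ω)
    (hint1 : Integrable (fun ω => Y ω * Real.log (pG ω)) μ)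
    (hint2 : Integrable (fun ω => (1 - Y ω) * Real.log (1 - pG ω)) μ)
    (hint3 : Integrable (fun ω => Y ω * Real.log (pF ω)) μ)
    (hint4 : Integrable (fun ω => (1 - Y ω) * Real.log (1 - pF ω)) μ) :
    ∫ ω, (-(Y ω) * Real.log (pG ω) - (1 - Y ω) * Real.log (1 - pG ω)) ∂μ ≤
      ∫ ω, (-(Y ω) * Real.log (pF ω) - (1 - Y ω) * Real.log (1 - pF ω)) ∂μ := by
  classical
  have hG_le : G ≤ mΩ := by
    rw [hG]; exact sup_le hξ.comap_le hU.comap_le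
  have hF_le : F ≤ mΩ := by
    rw [hF]; exact sup_le hX.comap_le hU.comap_le
  have hHdef : H = G ⊔ F := hH
  have hH_le : H ≤ mΩ := by rw [hHdef]; exact sup_le hG_le hF_le
  have hGH : G ≤ H := by rw [hHdef]; exact le_sup_left
  have hFH : F ≤ H := by rw [hHdef]; exact le_sup_right
  have hYint : Integrable Y μ := by
    refine (integrable_const (1:ℝ)).mono' hY.aestronglyMeasurable ?_
    filter_upwards with ω
    rcases hY01 ω with h | h <;> simp [h]
  set qG : Ω → ℝ := μ[Y | G] with hqGdef
  set qF : Ω → ℝ := μ[Y | F] with hqFdef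
  have hqGm : StronglyMeasurable[G] qG := stronglyMeasurable_condExp
  have hqFm : StronglyMeasurable[F] qF := stronglyMeasurable_condExp
  have hqGint : Integrable qG μ := integrable_condExp
  have hqG01 : ∀ᵐ ω ∂μ, qG ω ∈ Set.Ioo (0:ℝ) 1 := by
    filter_upwards [hpG, hpG01] with ω h1 h2; rw [← h1]; exact h2
  have hqF01 : ∀ᵐ ω ∂μ, qF ω ∈ Set.Ioo (0:ℝ) 1 := by
    filter_upwards [hpF, hpF01] with ω h1 h2; rw [← h1]; exact h2
  have hYind : (Y ⁻¹' ({1} : Set ℝ)).indicator (fun _ => (1:ℝ)) = Y := by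
    funext ω
    rcases hY01 ω with h | h <;>
      simp [Set.indicator_apply, Set.mem_preimage, h]
  set piSys : Set (Set Ω) :=
    {s | ∃ A B, MeasurableSet A ∧ MeasurableSet[G] B ∧ s = X ⁻¹' A ∩ B} with hpiSysdef
  have hH_gen : H = MeasurableSpace.generateFrom piSys := by
    refine le_antisymm ?_ (MeasurableSpace.generateFrom_le ?_)
    · rw [hHdef, hF]
      refine sup_le ?_ (sup_le ?_ ?_)
      · intro s hs
        exact MeasurableSpace.measurableSet_generateFrom
          ⟨Set.univ, s, MeasurableSet.univ, hs, by simp⟩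
      · intro s hs
        obtain ⟨A, hA, rfl⟩ := hs
        exact MeasurableSpace.measurableSet_generateFrom
          ⟨A, Set.univ, hA, (@MeasurableSet.univ Ω G), by simp⟩
      · intro s hs
        have hsG : MeasurableSet[G] s := by
          rw [hG]
          exact (le_sup_right : MeasurableSpace.comap U inferInstance ≤ _) s hs
        exact MeasurableSpace.measurableSet_generateFrom
          ⟨Set.univ, s, MeasurableSet.univ, hsG, by simp⟩
    · rintro s ⟨A, B, hA, hB, rfl⟩
      have h1 : MeasurableSet[H] (X ⁻¹' A) := by
        have hc : MeasurableSet[MeasurableSpace.comap X inferInstance] (X ⁻¹' A) :=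
          ⟨A, hA, rfl⟩
        have hle : MeasurableSpace.comap X inferInstance ≤ H := by
          refine le_trans ?_ hFH; rw [hF]; exact le_sup_left
        exact hle _ hc
      exact h1.inter (hGH _ hB)
  have hpiSys_pi : IsPiSystem piSys := by
    rintro s ⟨A₁, B₁, hA₁, hB₁, rfl⟩ t ⟨A₂, B₂, hA₂, hB₂, rfl⟩ -
    refine ⟨A₁ ∩ A₂, B₁ ∩ B₂, hA₁.inter hA₂, hB₁.inter hB₂, ?_⟩
    rw [Set.preimage_inter]; ext ω; simp only [Set.mem_inter_iff]; tauto
  have key_basic : ∀ (A : Set 𝒳) (B : Set Ω), MeasurableSet A → MeasurableSet[G] B →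
      ∫ ω in X ⁻¹' A ∩ B, qG ω ∂μ = ∫ ω in X ⁻¹' A ∩ B, Y ω ∂μ := by
    intro A B hA hB
    have hA'm : MeasurableSet (X ⁻¹' A) := hX hA
    have hBm : MeasurableSet B := hG_le _ hB
    have hind_int : Integrable ((X ⁻¹' A).indicator (fun _ => (1:ℝ))) μ :=
      (integrable_const (1:ℝ)).indicator hA'm
    have hind_bd : ∃ C, ∀ ω, ‖(X ⁻¹' A).indicator (fun _ => (1:ℝ)) ω‖ ≤ C := by
      refine ⟨1, fun ω => ?_⟩
      by_cases h : ω ∈ X ⁻¹' A <;> simp [Set.indicator_apply, h]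
    have hg_int : Integrable (fun ω => (X ⁻¹' A).indicator (fun _ => (1:ℝ)) ω *
        (Y ⁻¹' ({1} : Set ℝ)).indicator (fun _ => (1:ℝ)) ω) μ := by
      have hYint' : Integrable ((Y ⁻¹' ({1} : Set ℝ)).indicator (fun _ => (1:ℝ))) μ := by
        rw [hYind]; exact hYint
      exact hYint'.bdd_mul hind_int.aestronglyMeasurable (Filter.Eventually.of_forall hind_bd.choose_spec)
    have hmul_int : Integrable (qG * (X ⁻¹' A).indicator (fun _ => (1:ℝ))) μ := by
      have h := hqGint.bdd_mul hind_int.aestronglyMeasurable (Filter.Eventually.of_forall hind_bd.choose_spec)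
      exact h.congr (Filter.Eventually.of_forall fun ω => mul_comm _ _)
    have hmul_int' : Integrable (fun ω => (X ⁻¹' A).indicator (fun _ => (1:ℝ)) ω * qG ω) μ :=
      hmul_int.congr (Filter.Eventually.of_forall fun ω => mul_comm _ _)
    have expand : ∀ f : Ω → ℝ, ∫ ω in X ⁻¹' A ∩ B, f ω ∂μ =
        ∫ ω in B, (X ⁻¹' A).indicator (fun _ => (1:ℝ)) ω * f ω ∂μ := by
      intro f
      have hpt : ∀ ω, (X ⁻¹' A).indicator (fun _ => (1:ℝ)) ω * f ω =
          (X ⁻¹' A).indicator f ω := by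
        intro ω; by_cases h : ω ∈ X ⁻¹' A <;> simp [Set.indicator_apply, h]
      calc ∫ ω in X ⁻¹' A ∩ B, f ω ∂μ
          = ∫ ω in B ∩ X ⁻¹' A, f ω ∂μ := by rw [Set.inter_comm]
        _ = ∫ ω in B, (X ⁻¹' A).indicator f ω ∂μ := (setIntegral_indicator hA'm).symm
        _ = ∫ ω in B, (X ⁻¹' A).indicator (fun _ => (1:ℝ)) ω * f ω ∂μ :=
            integral_congr_ae (Filter.Eventually.of_forall fun ω => (hpt ω).symm)
    have e1 : μ[fun ω => (X ⁻¹' A).indicator (fun _ => (1:ℝ)) ω *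
        (Y ⁻¹' ({1} : Set ℝ)).indicator (fun _ => (1:ℝ)) ω | G]
        =ᵐ[μ] fun ω => (μ[(X ⁻¹' A).indicator (fun _ => (1:ℝ)) | G]) ω * qG ω := by
      have h := hCI A {1} hA (measurableSet_singleton 1)
      have h2 : μ[(Y ⁻¹' ({1} : Set ℝ)).indicator (fun _ => (1:ℝ)) | G] = qG := by
        rw [hYind]
      exact h.trans (by rw [h2])
    have e2 : (fun ω => (μ[(X ⁻¹' A).indicator (fun _ => (1:ℝ)) | G]) ω * qG ω)
        =ᵐ[μ] μ[fun ω => (X ⁻¹' A).indicator (fun _ => (1:ℝ)) ω * qG ω | G] := by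
      have h := condExp_mul_of_stronglyMeasurable_left hqGm hmul_int hind_int
      have hc1 : (qG * (X ⁻¹' A).indicator (fun _ => (1:ℝ))) =
          fun ω => (X ⁻¹' A).indicator (fun _ => (1:ℝ)) ω * qG ω :=
        funext fun ω => mul_comm _ _
      have hc2 : (qG * μ[(X ⁻¹' A).indicator (fun _ => (1:ℝ)) | G]) =
          fun ω => (μ[(X ⁻¹' A).indicator (fun _ => (1:ℝ)) | G]) ω * qG ω :=
        funext fun ω => mul_comm _ _
      rw [hc1, hc2] at h
      exact h.symm
    calc ∫ ω in X ⁻¹' A ∩ B, qG ω ∂μ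
        = ∫ ω in B, (X ⁻¹' A).indicator (fun _ => (1:ℝ)) ω * qG ω ∂μ := expand qG
      _ = ∫ ω in B, (μ[fun ω => (X ⁻¹' A).indicator (fun _ => (1:ℝ)) ω * qG ω | G]) ω ∂μ :=
          (setIntegral_condExp hG_le hmul_int' hB).symm
      _ = ∫ ω in B, (μ[(X ⁻¹' A).indicator (fun _ => (1:ℝ)) | G]) ω * qG ω ∂μ :=
          integral_congr_ae (ae_restrict_of_ae e2.symm)
      _ = ∫ ω in B, (μ[fun ω => (X ⁻¹' A).indicator (fun _ => (1:ℝ)) ω *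
            (Y ⁻¹' ({1} : Set ℝ)).indicator (fun _ => (1:ℝ)) ω | G]) ω ∂μ :=
          integral_congr_ae (ae_restrict_of_ae e1.symm)
      _ = ∫ ω in B, (X ⁻¹' A).indicator (fun _ => (1:ℝ)) ω *
            (Y ⁻¹' ({1} : Set ℝ)).indicator (fun _ => (1:ℝ)) ω ∂μ :=
          setIntegral_condExp hG_le hg_int hB
      _ = ∫ ω in B, (X ⁻¹' A).indicator (fun _ => (1:ℝ)) ω * Y ω ∂μ := by
          simp only [hYind]
      _ = ∫ ω in X ⁻¹' A ∩ B, Y ω ∂μ := (expand Y).symm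
  have key : ∀ s, MeasurableSet[H] s → ∫ ω in s, qG ω ∂μ = ∫ ω in s, Y ω ∂μ := by
    intro s hs
    refine MeasurableSpace.induction_on_inter (m := H)
      (C := fun s _ => ∫ ω in s, qG ω ∂μ = ∫ ω in s, Y ω ∂μ) hH_gen hpiSys_pi (by simp)
      ?_ ?_ ?_ s hs
    · rintro t ⟨A, B, hA, hB, rfl⟩
      exact key_basic A B hA hB
    · intro t htH ht
      have htm : MeasurableSet t := hH_le _ htH
      have h1 := integral_add_compl htm hqGint
      have h2 := integral_add_compl htm hYint
      have h3 : ∫ ω, qG ω ∂μ = ∫ ω, Y ω ∂μ := integral_condExp (f := Y) hG_le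
      linarith
    · intro f hdisj hmeas hC
      have hm : ∀ i, MeasurableSet (f i) := fun i => hH_le _ (hmeas i)
      rw [integral_iUnion hm hdisj hqGint.integrableOn,
        integral_iUnion hm hdisj hYint.integrableOn]
      exact tsum_congr hC
  have hqGH : qG =ᵐ[μ] μ[Y | H] :=
    ae_eq_condExp_of_forall_setIntegral_eq hH_le hYint
      (fun s _ _ => hqGint.integrableOn) (fun s hs _ => key s hs)
      ((hqGm.mono hGH).aestronglyMeasurable)
  -- transfer lemma: for H-measurable f, ∫ f·Z = ∫ f·E[Z|H]
  have transfer : ∀ f Z : Ω → ℝ, StronglyMeasurable[H] f → Integrable Z μ →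
      Integrable (fun ω => f ω * Z ω) μ →
      (∫ ω, f ω * Z ω ∂μ = ∫ ω, f ω * (μ[Z | H]) ω ∂μ) ∧
        Integrable (fun ω => f ω * (μ[Z | H]) ω) μ := by
    intro f Z hf hZ hfZ
    have hmul : Integrable (f * Z) μ := hfZ
    have h := condExp_mul_of_stronglyMeasurable_left hf hmul hZ
    constructor
    · calc ∫ ω, f ω * Z ω ∂μ = ∫ ω, (μ[f * Z | H]) ω ∂μ :=
          (integral_condExp (f := f * Z) hH_le).symm
        _ = ∫ ω, f ω * (μ[Z | H]) ω ∂μ := integral_congr_ae h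
    · exact integrable_condExp.congr h
  set f₁ : Ω → ℝ := fun ω => Real.log (qG ω) - Real.log (qF ω) with hf₁def
  set f₂ : Ω → ℝ := fun ω => Real.log (1 - qG ω) - Real.log (1 - qF ω) with hf₂def
  have hqGmH : Measurable[H] qG := (hqGm.mono hGH).measurable
  have hqFmH : Measurable[H] qF := (hqFm.mono hFH).measurable
  have hf₁m : StronglyMeasurable[H] f₁ :=
    ((Real.measurable_log.comp hqGmH).sub (Real.measurable_log.comp hqFmH)).stronglyMeasurable
  have hf₂m : StronglyMeasurable[H] f₂ := by
    refine Measurable.stronglyMeasurable ?_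
    have hc : Measurable[H] (fun _ : Ω => (1:ℝ)) := measurable_const
    exact (Real.measurable_log.comp (hc.sub hqGmH)).sub
      (Real.measurable_log.comp (hc.sub hqFmH))
  have hY1int : Integrable (fun ω => 1 - Y ω) μ := (integrable_const (1:ℝ)).sub hYint
  have h1Ycond : μ[fun ω => 1 - Y ω | H] =ᵐ[μ] fun ω => 1 - qG ω := by
    have hsub := condExp_sub (m := H) (μ := μ) (integrable_const (1:ℝ)) hYint
    have hcst : μ[(fun _ => (1:ℝ)) | H] = fun _ => (1:ℝ) := condExp_const hH_le 1
    have : (fun ω => 1 - Y ω) = (fun _ => (1:ℝ)) - Y := rfl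
    rw [this]
    refine hsub.trans ?_
    rw [hcst]
    filter_upwards [hqGH] with ω h
    simp [Pi.sub_apply, ← h]
  have hcgr1 : (fun ω => Y ω * Real.log (pG ω) - Y ω * Real.log (pF ω))
      =ᵐ[μ] fun ω => f₁ ω * Y ω := by
    filter_upwards [hpG, hpF] with ω h1 h2
    rw [h1, h2]; ring
  have hcgr2 : (fun ω => (1 - Y ω) * Real.log (1 - pG ω) -
      (1 - Y ω) * Real.log (1 - pF ω)) =ᵐ[μ] fun ω => f₂ ω * (1 - Y ω) := by
    filter_upwards [hpG, hpF] with ω h1 h2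
    rw [h1, h2]; ring
  have hfY1 : Integrable (fun ω => f₁ ω * Y ω) μ := (hint1.sub hint3).congr hcgr1
  have hfY2 : Integrable (fun ω => f₂ ω * (1 - Y ω)) μ := (hint2.sub hint4).congr hcgr2
  obtain ⟨eq1, int1⟩ := transfer f₁ Y hf₁m hYint hfY1
  obtain ⟨eq2, int2⟩ := transfer f₂ (fun ω => 1 - Y ω) hf₂m hY1int hfY2
  have eq1' : ∫ ω, f₁ ω * Y ω ∂μ = ∫ ω, f₁ ω * qG ω ∂μ := by
    rw [eq1]
    exact integral_congr_ae (by filter_upwards [hqGH] with ω h; rw [← h])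
  have int1' : Integrable (fun ω => f₁ ω * qG ω) μ :=
    int1.congr (by filter_upwards [hqGH] with ω h; rw [← h])
  have eq2' : ∫ ω, f₂ ω * (1 - Y ω) ∂μ = ∫ ω, f₂ ω * (1 - qG ω) ∂μ := by
    rw [eq2]
    exact integral_congr_ae (by filter_upwards [h1Ycond] with ω h; rw [h])
  have int2' : Integrable (fun ω => f₂ ω * (1 - qG ω)) μ :=
    int2.congr (by filter_upwards [h1Ycond] with ω h; rw [h])
  have hsum_nonneg : 0 ≤ ∫ ω, (f₁ ω * qG ω + f₂ ω * (1 - qG ω)) ∂μ := by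
    refine integral_nonneg_of_ae ?_
    filter_upwards [hqG01, hqF01] with ω h1 h2
    have h := gibbs_aux h1 h2
    calc (0:ℝ) ≤ qG ω * (Real.log (qG ω) - Real.log (qF ω)) +
        (1 - qG ω) * (Real.log (1 - qG ω) - Real.log (1 - qF ω)) := h
      _ = f₁ ω * qG ω + f₂ ω * (1 - qG ω) := by rw [hf₁def, hf₂def]; ring
  rw [integral_add int1' int2'] at hsum_nonneg
  have d1 : ∫ ω, Y ω * Real.log (pG ω) ∂μ - ∫ ω, Y ω * Real.log (pF ω) ∂μ =
      ∫ ω, f₁ ω * qG ω ∂μ := by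
    rw [← integral_sub hint1 hint3, ← eq1']
    exact integral_congr_ae hcgr1
  have d2 : ∫ ω, (1 - Y ω) * Real.log (1 - pG ω) ∂μ -
      ∫ ω, (1 - Y ω) * Real.log (1 - pF ω) ∂μ = ∫ ω, f₂ ω * (1 - qG ω) ∂μ := by
    rw [← integral_sub hint2 hint4, ← eq2']
    exact integral_congr_ae hcgr2
  have hLHS : ∫ ω, (-(Y ω) * Real.log (pG ω) - (1 - Y ω) * Real.log (1 - pG ω)) ∂μ =
      -∫ ω, Y ω * Real.log (pG ω) ∂μ - ∫ ω, (1 - Y ω) * Real.log (1 - pG ω) ∂μ := by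
    calc ∫ ω, (-(Y ω) * Real.log (pG ω) - (1 - Y ω) * Real.log (1 - pG ω)) ∂μ
        = ∫ ω, (-(Y ω * Real.log (pG ω)) - (1 - Y ω) * Real.log (1 - pG ω)) ∂μ :=
          integral_congr_ae (Filter.Eventually.of_forall fun ω => by ring)
      _ = (∫ ω, -(Y ω * Real.log (pG ω)) ∂μ) -
            ∫ ω, (1 - Y ω) * Real.log (1 - pG ω) ∂μ := integral_sub hint1.neg hint2
      _ = -∫ ω, Y ω * Real.log (pG ω) ∂μ -
            ∫ ω, (1 - Y ω) * Real.log (1 - pG ω) ∂μ := by rw [integral_neg]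
  have hRHS : ∫ ω, (-(Y ω) * Real.log (pF ω) - (1 - Y ω) * Real.log (1 - pF ω)) ∂μ =
      -∫ ω, Y ω * Real.log (pF ω) ∂μ - ∫ ω, (1 - Y ω) * Real.log (1 - pF ω) ∂μ := by
    calc ∫ ω, (-(Y ω) * Real.log (pF ω) - (1 - Y ω) * Real.log (1 - pF ω)) ∂μ
        = ∫ ω, (-(Y ω * Real.log (pF ω)) - (1 - Y ω) * Real.log (1 - pF ω)) ∂μ :=
          integral_congr_ae (Filter.Eventually.of_forall fun ω => by ring)
      _ = (∫ ω, -(Y ω * Real.log (pF ω)) ∂μ) -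
            ∫ ω, (1 - Y ω) * Real.log (1 - pF ω) ∂μ := integral_sub hint3.neg hint4
      _ = -∫ ω, Y ω * Real.log (pF ω) ∂μ -
            ∫ ω, (1 - Y ω) * Real.log (1 - pF ω) ∂μ := by rw [integral_neg]
  rw [hLHS, hRHS]
  linarith [d1, d2, hsum_nonneg]

theorem cross_entropy_latent_le_observed
    {Ω 𝒳 Ξ 𝒰 : Type*} [MeasurableSpace Ω]
    [MeasurableSpace 𝒳] [StandardBorelSpace 𝒳]
    [MeasurableSpace Ξ] [StandardBorelSpace Ξ]
    [MeasurableSpace 𝒰] [StandardBorelSpace 𝒰]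
    (μ : Measure Ω) [IsProbabilityMeasure μ]
    (Y : Ω → ℝ) (hY : Measurable Y) (hY01 : ∀ ω, Y ω = 0 ∨ Y ω = 1)
    (X : Ω → 𝒳) (hX : Measurable X)
    (ξ : Ω → Ξ) (hξ : Measurable ξ)
    (U : Ω → 𝒰) (hU : Measurable U)
    (G F : MeasurableSpace Ω)
    (hG : G = MeasurableSpace.comap ξ inferInstance ⊔ MeasurableSpace.comap U inferInstance)
    (hF : F = MeasurableSpace.comap X inferInstance ⊔ MeasurableSpace.comap U inferInstance)
    (pG pF : Ω → ℝ)
    (hpG : pG =ᵐ[μ] μ[Y | G]) (hpF : pF =ᵐ[μ] μ[Y | F])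
    (hpG01 : ∀ᵐ ω ∂μ, pG ω ∈ Set.Ioo (0:ℝ) 1)
    (hpF01 : ∀ᵐ ω ∂μ, pF ω ∈ Set.Ioo (0:ℝ) 1)
    -- conditional independence of X and Y given G
    (hCI : ∀ (A : Set 𝒳) (B : Set ℝ), MeasurableSet A → MeasurableSet B →
      (μ[fun ω => (X ⁻¹' A).indicator (fun _ => (1:ℝ)) ω *
          (Y ⁻¹' B).indicator (fun _ => (1:ℝ)) ω | G])
        =ᵐ[μ]
      fun ω => (μ[(X ⁻¹' A).indicator (fun _ => (1:ℝ)) | G]) ω *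
        (μ[(Y ⁻¹' B).indicator (fun _ => (1:ℝ)) | G]) ω)
    (hint1 : Integrable (fun ω => Y ω * Real.log (pG ω)) μ)
    (hint2 : Integrable (fun ω => (1 - Y ω) * Real.log (1 - pG ω)) μ)
    (hint3 : Integrable (fun ω => Y ω * Real.log (pF ω)) μ)
    (hint4 : Integrable (fun ω => (1 - Y ω) * Real.log (1 - pF ω)) μ) :
    ∫ ω, (-(Y ω) * Real.log (pG ω) - (1 - Y ω) * Real.log (1 - pG ω)) ∂μ ≤
      ∫ ω, (-(Y ω) * Real.log (pF ω) - (1 - Y ω) * Real.log (1 - pF ω)) ∂μ := by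
  exact cross_entropy_aux G F (G ⊔ F) μ Y hY hY01 X hX ξ hξ U hU hG hF rfl pG pF
    hpG hpF hpG01 hpF01 hCI hint1 hint2 hint3 hint4
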